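/- (Looseness of InfoNCE when mutual information exceeds log K, final remark of the proof of Proposition 1). For every K ≥ 1 and every critic h : S × T → ℝ, if I(p) > log K then I_NCE(K) < I(p); i.e., the encoder-based InfoNCE bound is strictly loose whenever the mutual information exceeds log K. -/
import Mathlib


open Finset

variable {S T : Type*}

/-- Marginal of the joint pmf `p` on the first coordinate: `pS(z) = Σ_y p(z,y)`. -/
noncomputable def margS [Fintype T] (p : S × T → ℝ) (z : S) : ℝ := ∑ y, p (z, y)

/-- Marginal of the joint pmf `p` on the second coordinate: `pT(y) = Σ_z p(z,y)`. -/
noncomputable def margT [Fintype S] (p : S × T → ℝ) (y : T) : ℝ := ∑ z, p (z, y)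

/-- Mutual information `I(p) = Σ_{(z,y)} p(z,y)·log(p(z,y)/(pS(z)·pT(y)))`. -/
noncomputable def mutInfo [Fintype S] [Fintype T] (p : S × T → ℝ) : ℝ :=
  ∑ z, ∑ y, p (z, y) * Real.log (p (z, y) / (margS p z * margT p y))

/-- Entropy of the marginal `pT`: `H(pT) = −Σ_y pT(y)·log pT(y)`. -/
noncomputable def entropyT [Fintype S] [Fintype T] (p : S × T → ℝ) : ℝ :=
  -∑ y, margT p y * Real.log (margT p y)

/-- Kullback–Leibler divergence on a finite type: `KL(u‖v) = Σ_x u(x)·log(u(x)/v(x))`. -/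
noncomputable def klFin {α : Type*} [Fintype α] (u v : α → ℝ) : ℝ :=
  ∑ x, u x * Real.log (u x / v x)

/-- Conditional pmf on `T` given `z`: `p(·|z)(y) = p(z,y)/pS(z)`. -/
noncomputable def condT [Fintype T] (p : S × T → ℝ) (z : S) (y : T) : ℝ :=
  p (z, y) / margS p z

/-- Partition function of a critic `h`: `Z̃(z) = Σ_y pT(y)·exp(h(z,y))`. -/
noncomputable def partFun [Fintype S] [Fintype T] (p : S × T → ℝ) (h : S × T → ℝ) (z : S) : ℝ :=
  ∑ y, margT p y * Real.exp (h (z, y))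

/-- Decoder-based (unnormalized Barber–Agakov) lower bound
`I_DLB = Σ_{(z,y)} p(z,y)·h(z,y) − Σ_z pS(z)·log Z̃(z)`. -/
noncomputable def IDLB [Fintype S] [Fintype T] (p h : S × T → ℝ) : ℝ :=
  (∑ z, ∑ y, p (z, y) * h (z, y)) - ∑ z, margS p z * Real.log (partFun p h z)

/-- Monte Carlo estimator of the partition function from a positive sample `y`
and `K − 1 = n` negatives `ys`: `m(z; y, ys) = (1/K)·(e^{h(z,y)} + Σ_i e^{h(z,ys_i)})`,
with `K = n + 1`. -/
noncomputable def mEst (h : S × T → ℝ) (n : ℕ) (z : S) (y : T) (ys : Fin n → T) : ℝ :=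
  (Real.exp (h (z, y)) + ∑ i, Real.exp (h (z, ys i))) / (n + 1)

/-- InfoNCE bound with `K = n + 1` samples:
`I_NCE(K) = Σ_{(z,y)} Σ_{ys} p(z,y)·ΠpT(ys)·log( e^{h(z,y)} / m(z; y, ys) )`. -/
noncomputable def INCE [Fintype S] [Fintype T] (p h : S × T → ℝ) (n : ℕ) : ℝ :=
  ∑ z, ∑ y, ∑ ys : Fin n → T,
    p (z, y) * (∏ i, margT p (ys i)) *
      Real.log (Real.exp (h (z, y)) / mEst h n z y ys)

/-- STATEMENT 15 (Looseness of InfoNCE when the mutual information exceeds `log K`),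
with `K = n + 1 ≥ 1`. -/
theorem infonce_strictly_loose [Fintype S] [Fintype T] [Nonempty S] [Nonempty T]
    (p : S × T → ℝ) (hp_pos : ∀ x, 0 < p x) (hp_sum : ∑ x, p x = 1)
    (h : S × T → ℝ) (n : ℕ)
    (hI : mutInfo p > Real.log (n + 1)) :
    INCE p h n < mutInfo p := by
  have hK : (0:ℝ) < (n:ℝ) + 1 := by positivity
  have hT : ∀ y, 0 < margT p y := fun y =>
    Finset.sum_pos (fun z _ => hp_pos _) Finset.univ_nonempty
  -- each log term is at most log (n+1)
  have hle : ∀ z y (ys : Fin n → T),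
      Real.log (Real.exp (h (z, y)) / mEst h n z y ys) ≤ Real.log ((n:ℝ) + 1) := by
    intro z y ys
    have hm : 0 < mEst h n z y ys := by
      unfold mEst
      apply div_pos _ hK
      have : (0:ℝ) ≤ ∑ i, Real.exp (h (z, ys i)) :=
        Finset.sum_nonneg fun i _ => (Real.exp_pos _).le
      nlinarith [Real.exp_pos (h (z, y))]
    have hratio : Real.exp (h (z, y)) / mEst h n z y ys ≤ (n:ℝ) + 1 := by
      rw [div_le_iff₀ hm]
      unfold mEst
      rw [mul_div_cancel₀ _ hK.ne']
      have : (0:ℝ) ≤ ∑ i, Real.exp (h (z, ys i)) :=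
        Finset.sum_nonneg fun i _ => (Real.exp_pos _).le
      linarith
    exact Real.log_le_log (div_pos (Real.exp_pos _) hm) hratio
  -- sum of the product weights over ys is 1
  have hTsum : ∑ y, margT p y = 1 := by
    unfold margT
    rw [Finset.sum_comm, ← Fintype.sum_prod_type]
    exact hp_sum
  have S1 : ∑ ys : Fin n → T, ∏ i, margT p (ys i) = 1 := by
    have h1 := Finset.prod_univ_sum (fun _ : Fin n => (Finset.univ : Finset T))
      (fun _ y => margT p y)
    rw [Fintype.piFinset_univ] at h1
    rw [← h1]
    simp [hTsum]
  have hsum1 : ∑ z, ∑ y, p (z, y) = 1 := by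
    rw [← Fintype.sum_prod_type]; exact hp_sum
  have hbound : INCE p h n ≤ Real.log ((n:ℝ) + 1) := by
    unfold INCE
    calc ∑ z, ∑ y, ∑ ys : Fin n → T,
          p (z, y) * (∏ i, margT p (ys i)) *
            Real.log (Real.exp (h (z, y)) / mEst h n z y ys)
        ≤ ∑ z, ∑ y, ∑ ys : Fin n → T,
          p (z, y) * (∏ i, margT p (ys i)) * Real.log ((n:ℝ) + 1) := by
          apply Finset.sum_le_sum; intro z _
          apply Finset.sum_le_sum; intro y _
          apply Finset.sum_le_sum; intro ys _
          exact mul_le_mul_of_nonneg_left (hle z y ys)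
            (mul_nonneg (hp_pos _).le
              (Finset.prod_nonneg fun i _ => (hT _).le))
      _ = Real.log ((n:ℝ) + 1) := by
          have hz : ∀ z y, ∑ ys : Fin n → T,
              p (z, y) * (∏ i, margT p (ys i)) * Real.log ((n:ℝ) + 1)
              = p (z, y) * Real.log ((n:ℝ) + 1) := by
            intro z y
            rw [← Finset.sum_mul, ← Finset.mul_sum, S1, mul_one]
          simp_rw [hz, ← Finset.sum_mul, hsum1, one_mul]
  calc INCE p h n ≤ Real.log ((n:ℝ) + 1) := hbound
    _ < mutInfo p := hI
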